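/- arXiv:2201.12974 — 3 statements merged into one kernel-verified Lean document; each statement's English description precedes it below -/
import Mathlib

section
/- For 1 ≤ α_1 ≤ α_2, the set {x ∈ (0,1) : the partial quotients a_n(x) are non-decreasing and α_1 ≤ liminf_{n→∞} (log a_n(x))/(log n) ≤ α_2} has Hausdorff dimension at most (α_2 - 1)/(2α_1). -/
open Filter MeasureTheory Set
open scoped ENNReal NNReal Topology

/-- The Gauss map. -/
noncomputable def gaussMap (x : ℝ) : ℝ := Int.fract x⁻¹

/-- The `n`-th partial quotient (for `n ≥ 1`) of the continued fraction expansion of `x`. -/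
noncomputable def cfA (n : ℕ) (x : ℝ) : ℕ := ⌊(gaussMap^[n - 1] x)⁻¹⌋₊

/-- The set `Λ` of points of `(0,1)` whose partial quotients are non-decreasing. -/
noncomputable def Lam : Set ℝ :=
  {x | x ∈ Set.Ioo (0:ℝ) 1 ∧ ∀ n : ℕ, 1 ≤ n → cfA n x ≤ cfA (n + 1) x}

lemma cfA_shift (i : ℕ) (x : ℝ) : cfA (i + 2) x = cfA (i + 1) (gaussMap x) := by
  simp only [cfA, Nat.add_sub_cancel]
  rw [show i + 2 - 1 = i + 1 by omega, Function.iterate_succ_apply]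

lemma cfA_one (x : ℝ) : cfA 1 x = ⌊x⁻¹⌋₊ := by simp [cfA]

/-- basic structure: if `x ∈ [0,1)` and `a₁ ≥ 1` then `x = (a₁ + T x)⁻¹`, etc. -/
lemma cfA_step {x : ℝ} (hx : x ∈ Set.Ico (0:ℝ) 1) (h1 : 1 ≤ cfA 1 x) :
    0 < x ∧ gaussMap x ∈ Set.Ico (0:ℝ) 1 ∧ x = ((cfA 1 x : ℝ) + gaussMap x)⁻¹ := by
  rw [cfA_one] at h1 ⊢
  have hx0 : 0 < x := by
    rcases lt_or_eq_of_le hx.1 with h | h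
    · exact h
    · exfalso; simp [← h] at h1
  have hinv : (1:ℝ) ≤ x⁻¹ := by
    rw [le_inv_comm₀ one_pos hx0]; simpa using hx.2.le
  have hfl : ((⌊x⁻¹⌋₊ : ℝ)) = (⌊x⁻¹⌋ : ℝ) := by
    exact natCast_floor_eq_intCast_floor (by linarith)
  refine ⟨hx0, ⟨Int.fract_nonneg _, Int.fract_lt_one _⟩, ?_⟩
  have : (⌊x⁻¹⌋₊ : ℝ) + gaussMap x = x⁻¹ := by
    rw [gaussMap, Int.fract, hfl]; ring
  rw [this, inv_inv]

lemma cf_dist : ∀ (n : ℕ) (x y : ℝ), x ∈ Set.Ico (0:ℝ) 1 → y ∈ Set.Ico (0:ℝ) 1 →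
    (∀ i < n, 1 ≤ cfA (i+1) x) → (∀ i < n, cfA (i+1) x = cfA (i+1) y) →
    |x - y| ≤ ∏ i ∈ Finset.range n, ((cfA (i+1) x : ℝ))⁻¹ ^ 2 := by
  intro n
  induction n with
  | zero =>
    intro x y hx hy _ _
    simp only [Finset.range_zero, Finset.prod_empty]
    rw [abs_sub_le_iff]; constructor <;> nlinarith [hx.1, hx.2, hy.1, hy.2]
  | succ n ih =>
    intro x y hx hy hge heq
    have h1x : 1 ≤ cfA 1 x := by simpa using hge 0 (Nat.succ_pos n)
    have h1y : 1 ≤ cfA 1 y := by rw [← heq 0 (Nat.succ_pos n)]; exact h1x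
    obtain ⟨hx0, hTx, hxe⟩ := cfA_step hx h1x
    obtain ⟨hy0, hTy, hye⟩ := cfA_step hy h1y
    set a : ℕ := cfA 1 x with ha
    have hay : cfA 1 y = a := (heq 0 (Nat.succ_pos n)).symm
    set u := gaussMap x with hu'
    set v := gaussMap y with hv'
    rw [hay] at hye
    have hIH : |u - v| ≤ ∏ i ∈ Finset.range n, ((cfA (i+1) u : ℝ))⁻¹ ^ 2 :=
      ih u v hTx hTy
      (fun i hi => by rw [hu', ← cfA_shift]; exact hge (i+1) (by omega))
      (fun i hi => by rw [hu', hv', ← cfA_shift, ← cfA_shift]; exact heq (i+1) (by omega))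
    have ha1 : (1:ℝ) ≤ (a:ℝ) := by exact_mod_cast h1x
    have hu : (a:ℝ) ≤ (a:ℝ) + u := by linarith [hTx.1]
    have hv : (a:ℝ) ≤ (a:ℝ) + v := by linarith [hTy.1]
    have hu0 : (0:ℝ) < (a:ℝ) + u := by linarith
    have hv0 : (0:ℝ) < (a:ℝ) + v := by linarith
    have key : |x - y| ≤ |u - v| * ((a:ℝ))⁻¹ ^ 2 := by
      have hxy : x - y = (v - u) / (((a:ℝ) + u) * ((a:ℝ) + v)) := by
        rw [hxe, hye]; field_simp; ring
      rw [hxy, abs_div, abs_of_pos (show (0:ℝ) < ((a:ℝ)+u)*((a:ℝ)+v) by positivity),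
        abs_sub_comm v u, div_le_iff₀ (by positivity)]
      have h2 : (1:ℝ) ≤ ((a:ℝ))⁻¹ ^ 2 * (((a:ℝ) + u) * ((a:ℝ) + v)) := by
        rw [show ((a:ℝ))⁻¹ ^ 2 * (((a:ℝ) + u) * ((a:ℝ) + v))
            = (((a:ℝ) + u) / a) * (((a:ℝ) + v) / a) by field_simp]
        have hx1 : (1:ℝ) ≤ ((a:ℝ) + u) / a := (one_le_div (by linarith)).2 hu
        have hy1 : (1:ℝ) ≤ ((a:ℝ) + v) / a := (one_le_div (by linarith)).2 hv
        nlinarith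
      nlinarith [abs_nonneg (u - v)]
    calc |x - y| ≤ |u - v| * ((a:ℝ))⁻¹ ^ 2 := key
      _ ≤ (∏ i ∈ Finset.range n, ((cfA (i+1) u : ℝ))⁻¹ ^ 2) * ((a:ℝ))⁻¹ ^ 2 := by
          gcongr <;> first | positivity | exact abs_nonneg _ | exact hIH
      _ = ∏ i ∈ Finset.range (n+1), ((cfA (i+1) x : ℝ))⁻¹ ^ 2 := by
          rw [Finset.prod_range_succ']
          congr 1

lemma card_mono_le {n M : ℕ} (S : Finset (Fin n → ℕ))
    (hS : ∀ a ∈ S, Monotone a ∧ ∀ i, a i ≤ M) : S.card ≤ (M + n).choose n := by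
  classical
  have hmaps : ∀ a ∈ S, (Finset.image (fun i : Fin n => a i + (i:ℕ)) Finset.univ)
      ∈ (Finset.range (M + n)).powersetCard n := by
    intro a ha
    obtain ⟨hmono, hle⟩ := hS a ha
    rw [Finset.mem_powersetCard]
    constructor
    · intro x hx
      simp only [Finset.mem_image, Finset.mem_univ, true_and] at hx
      obtain ⟨i, rfl⟩ := hx
      have := hle i
      have := i.2
      simp only [Finset.mem_range]; omega
    · rw [Finset.card_image_of_injective _ (fun i j hij => ?_), Finset.card_univ,
        Fintype.card_fin]
      by_contra hne
      rcases lt_or_gt_of_ne hne with h | h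
      · have := hmono h.le; omega
      · have := hmono h.le
        have : (j:ℕ) < (i:ℕ) := h; omega
  have hsm : ∀ a ∈ S, StrictMono (fun i : Fin n => a i + (i:ℕ)) := by
    intro a ha i j hij
    have := (hS a ha).1 hij.le
    simp only
    have : (i:ℕ) < (j:ℕ) := hij
    omega
  have hinj : Set.InjOn (fun a : Fin n → ℕ => Finset.image (fun i : Fin n => a i + (i:ℕ)) Finset.univ) S := by
    intro a ha b hb hab
    simp only at hab
    have hca : (Finset.image (fun i : Fin n => a i + (i:ℕ)) Finset.univ).card = n :=
      ((Finset.mem_powersetCard.1 (hmaps a ha)).2)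
    have hA := Finset.orderEmbOfFin_unique hca
      (f := fun i : Fin n => a i + (i:ℕ))
      (fun i => Finset.mem_image_of_mem _ (Finset.mem_univ i)) (hsm a ha)
    have hB := Finset.orderEmbOfFin_unique hca
      (f := fun i : Fin n => b i + (i:ℕ))
      (fun i => hab ▸ Finset.mem_image_of_mem _ (Finset.mem_univ i)) (hsm b hb)
    funext i
    have := congrFun (hA.trans hB.symm) i
    simpa using this
  calc S.card ≤ ((Finset.range (M + n)).powersetCard n).card :=
        Finset.card_le_card_of_injOn _ hmaps hinj
    _ = (M + n).choose n := by rw [Finset.card_powersetCard, Finset.card_range]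

lemma pow_le_three_pow_mul_factorial : ∀ n : ℕ, (n:ℝ)^n ≤ 3^n * (Nat.factorial n : ℝ)
  | 0 => by norm_num
  | (n+1) => by
    have key : ((n+1:ℕ):ℝ)^n ≤ 3 * (n:ℝ)^n := by
      rcases Nat.eq_zero_or_pos n with rfl | hn
      · norm_num
      · have hn0 : (0:ℝ) < n := by exact_mod_cast hn
        have h1 : ((n+1:ℕ):ℝ) = (n:ℝ) * (1 + 1/(n:ℝ)) := by push_cast; field_simp
        rw [h1, mul_pow]
        have h2 : (1 + 1/(n:ℝ))^n ≤ 3 := by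
          have h3 : (1 + 1/(n:ℝ)) ≤ Real.exp (1/(n:ℝ)) := by
            have := Real.add_one_le_exp (1/(n:ℝ)); linarith
          calc (1 + 1/(n:ℝ))^n ≤ (Real.exp (1/(n:ℝ)))^n := by
                apply pow_le_pow_left₀ (by positivity) h3
            _ = Real.exp ((n:ℝ) * (1/(n:ℝ))) := by rw [← Real.exp_nat_mul]
            _ = Real.exp 1 := by congr 1; field_simp
            _ ≤ 3 := by linarith [Real.exp_one_lt_d9]
        calc (n:ℝ)^n * (1 + 1/(n:ℝ))^n ≤ (n:ℝ)^n * 3 := by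
              apply mul_le_mul_of_nonneg_left h2 (by positivity)
          _ = 3 * (n:ℝ)^n := by ring
    have ih := pow_le_three_pow_mul_factorial n
    have hfac : ((Nat.factorial (n+1)) : ℝ) = (n+1) * (Nat.factorial n : ℝ) := by
      rw [Nat.factorial_succ]; push_cast; ring
    calc ((n+1:ℕ):ℝ)^(n+1) = ((n+1:ℕ):ℝ)^n * ((n+1:ℕ):ℝ) := by ring
      _ ≤ (3 * (n:ℝ)^n) * ((n+1:ℕ):ℝ) := by
          apply mul_le_mul_of_nonneg_right key (by positivity)
      _ ≤ (3 * (3^n * (Nat.factorial n : ℝ))) * ((n+1:ℕ):ℝ) := by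
          apply mul_le_mul_of_nonneg_right (by linarith) (by positivity)
      _ = 3^(n+1) * ((Nat.factorial (n+1)) : ℝ) := by rw [hfac]; push_cast; ring

noncomputable def Mn (θ₂ : ℝ) (n : ℕ) : ℕ := ⌊(n:ℝ)^θ₂⌋₊

noncomputable def Aset (θ₁ θ₂ : ℝ) (N' n : ℕ) : Finset (Fin n → ℕ) :=
  (Fintype.piFinset fun _ => Finset.Icc 1 (Mn θ₂ n)).filter
    (fun a => Monotone a ∧ ∀ i : Fin n, N' ≤ (i:ℕ)+1 → (((i:ℕ)+1:ℝ))^θ₁ ≤ (a i : ℝ))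

def cyl (n : ℕ) (a : Fin n → ℕ) : Set ℝ :=
  {x | x ∈ Set.Ico (0:ℝ) 1 ∧ ∀ i : Fin n, cfA ((i:ℕ)+1) x = a i}

noncomputable def wt (θ₁ : ℝ) (N' i : ℕ) : ℝ :=
  if N' ≤ i+1 then (((i:ℕ)+1:ℝ))^(-(2*θ₁)) else 1

noncomputable def dn (θ₁ : ℝ) (N' n : ℕ) : ℝ := ∏ i ∈ Finset.range n, wt θ₁ N' i

lemma wt_pos (θ₁ : ℝ) (N' i : ℕ) : 0 < wt θ₁ N' i := by
  unfold wt; split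
  · exact Real.rpow_pos_of_pos (by positivity) _
  · norm_num

lemma wt_le_one {θ₁ : ℝ} (hθ : 0 ≤ θ₁) (N' i : ℕ) : wt θ₁ N' i ≤ 1 := by
  unfold wt; split
  · apply Real.rpow_le_one_of_one_le_of_nonpos
    · exact_mod_cast Nat.one_le_iff_ne_zero.2 (by omega)
    · nlinarith
  · exact le_rfl

lemma dn_pos (θ₁ : ℝ) (N' n : ℕ) : 0 < dn θ₁ N' n :=
  Finset.prod_pos fun i _ => wt_pos θ₁ N' i

lemma dn_le_one {θ₁ : ℝ} (hθ : 0 ≤ θ₁) (N' n : ℕ) : dn θ₁ N' n ≤ 1 :=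
  Finset.prod_le_one (fun i _ => (wt_pos θ₁ N' i).le) (fun i _ => wt_le_one hθ N' i)

lemma mem_Aset_one_le {θ₁ θ₂ : ℝ} {N' n : ℕ} {a : Fin n → ℕ}
    (ha : a ∈ Aset θ₁ θ₂ N' n) (i : Fin n) : 1 ≤ a i ∧ a i ≤ Mn θ₂ n := by
  have := (Finset.mem_filter.1 ha).1
  rw [Fintype.mem_piFinset] at this
  simpa using this i

lemma cyl_dist {n : ℕ} {a : Fin n → ℕ} (ha : ∀ i, 1 ≤ a i) {x y : ℝ}
    (hx : x ∈ cyl n a) (hy : y ∈ cyl n a) :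
    |x - y| ≤ ∏ i : Fin n, ((a i : ℝ))⁻¹ ^ 2 := by
  have h := cf_dist n x y hx.1 hy.1
    (fun i hi => by rw [hx.2 ⟨i, hi⟩]; exact ha _)
    (fun i hi => by rw [hx.2 ⟨i, hi⟩, hy.2 ⟨i, hi⟩])
  refine h.trans_eq ?_
  rw [← Fin.prod_univ_eq_prod_range (fun i => ((cfA (i+1) x : ℝ))⁻¹ ^ 2)]
  exact Finset.prod_congr rfl fun i _ => by rw [hx.2 i]

lemma prod_inv_sq_le_dn {θ₁ θ₂ : ℝ} (hθ : 0 ≤ θ₁) {N' n : ℕ} {a : Fin n → ℕ}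
    (ha : a ∈ Aset θ₁ θ₂ N' n) :
    ∏ i : Fin n, ((a i : ℝ))⁻¹ ^ 2 ≤ dn θ₁ N' n := by
  rw [dn, ← Fin.prod_univ_eq_prod_range (fun i => wt θ₁ N' i)]
  apply Finset.prod_le_prod (fun i _ => by positivity)
  intro i _
  have h1 : 1 ≤ a i := (mem_Aset_one_le ha i).1
  have ha1 : (1:ℝ) ≤ (a i : ℝ) := by exact_mod_cast h1
  by_cases hN : N' ≤ (i:ℕ)+1
  case pos =>
    rw [wt, if_pos hN]
    have hlb := (Finset.mem_filter.1 ha).2.2 i hN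
    have hX : (0:ℝ) < ((i:ℕ)+1:ℝ) := by positivity
    have hXp : (0:ℝ) < (((i:ℕ)+1:ℝ))^θ₁ := Real.rpow_pos_of_pos hX _
    have hinv : ((a i : ℝ))⁻¹ ≤ ((((i:ℕ)+1:ℝ))^θ₁)⁻¹ := by
      apply inv_anti₀ hXp hlb
    calc ((a i : ℝ))⁻¹ ^ 2 ≤ (((((i:ℕ)+1:ℝ))^θ₁)⁻¹) ^ 2 := by
          apply pow_le_pow_left₀ (by positivity) hinv
      _ = (((i:ℕ)+1:ℝ))^(-(2*θ₁)) := by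
          rw [inv_pow, ← Real.rpow_natCast ((((i:ℕ)+1:ℝ))^θ₁) 2, ← Real.rpow_mul hX.le,
            ← Real.rpow_neg hX.le]
          norm_num
          ring_nf
  case neg =>
    rw [wt, if_neg hN]
    calc ((a i : ℝ))⁻¹ ^ 2 ≤ 1^2 := by
          apply pow_le_pow_left₀ (by positivity)
          exact inv_le_one_of_one_le₀ ha1
      _ = 1 := one_pow 2

lemma diam_cyl_le {θ₁ θ₂ : ℝ} (hθ : 0 ≤ θ₁) {N' n : ℕ} {a : Fin n → ℕ}
    (ha : a ∈ Aset θ₁ θ₂ N' n) :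
    EMetric.diam (cyl n a) ≤ ENNReal.ofReal (dn θ₁ N' n) := by
  apply EMetric.diam_le
  intro x hx y hy
  rw [edist_dist, Real.dist_eq]
  apply ENNReal.ofReal_le_ofReal
  exact (cyl_dist (fun i => (mem_Aset_one_le ha i).1) hx hy).trans (prod_inv_sq_le_dn hθ ha)

lemma dn_le_geom {θ₁ : ℝ} (hθ : 1/2 ≤ θ₁) {N' : ℕ} (hN' : 2 ≤ N') :
    ∀ n, dn θ₁ N' n ≤ 2^N' * (1/2)^n := by
  intro n
  induction n with
  | zero => simp [dn]; exact one_le_pow₀ (by norm_num)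
  | succ n ih =>
    rw [dn, Finset.prod_range_succ, ← dn]
    by_cases hN : N' ≤ n+1
    · have hw : wt θ₁ N' n ≤ 1/2 := by
        unfold wt
        rw [if_pos hN]
        have h2 : ((n:ℕ)+1:ℝ)^(-(2*θ₁)) ≤ ((n:ℕ)+1:ℝ)^(-(1:ℝ)) := by
          apply Real.rpow_le_rpow_of_exponent_le
          · have : (0:ℝ) ≤ (n:ℝ) := Nat.cast_nonneg n
            linarith
          · linarith
        have h3 : ((n:ℕ)+1:ℝ)^(-(1:ℝ)) = ((n:ℝ)+1)⁻¹ := by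
          rw [Real.rpow_neg_one]
        have h4 : (2:ℝ) ≤ (n:ℝ)+1 := by
          have : 1 ≤ n := by omega
          have : (1:ℝ) ≤ n := by exact_mod_cast this
          linarith
        have h5 : ((n:ℝ)+1)⁻¹ ≤ 1/2 := by
          rw [inv_le_comm₀ (by linarith) (by norm_num)] <;> linarith
        calc ((n:ℕ)+1:ℝ)^(-(2*θ₁)) ≤ ((n:ℕ)+1:ℝ)^(-(1:ℝ)) := h2
          _ = ((n:ℝ)+1)⁻¹ := h3
          _ ≤ 1/2 := h5
      calc dn θ₁ N' n * wt θ₁ N' n ≤ (2^N' * (1/2)^n) * (1/2) := by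
            apply mul_le_mul ih hw (wt_pos θ₁ N' n).le (by positivity)
        _ = 2^N' * (1/2)^(n+1) := by ring
    · have hd1 : dn θ₁ N' n * wt θ₁ N' n ≤ 1 := by
        have := dn_le_one (by linarith : (0:ℝ) ≤ θ₁) N' n
        have := wt_le_one (by linarith : (0:ℝ) ≤ θ₁) N' n
        nlinarith [dn_pos θ₁ N' n, wt_pos θ₁ N' n]
      have : (1:ℝ) ≤ 2^N' * (1/2)^(n+1) := by
        rw [show (2:ℝ)^N' * (1/2)^(n+1) = 2^N' / 2^(n+1) by rw [one_div, inv_pow, div_eq_mul_inv]]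
        rw [le_div_iff₀ (by positivity), one_mul]
        apply pow_le_pow_right₀ (by norm_num)
        omega
      linarith

lemma card_Aset_le (θ₁ θ₂ : ℝ) (N' n : ℕ) :
    (Aset θ₁ θ₂ N' n).card ≤ (Mn θ₂ n + n).choose n := by
  apply card_mono_le
  intro a ha
  exact ⟨(Finset.mem_filter.1 ha).2.1, fun i => (mem_Aset_one_le ha i).2⟩

section
variable (θ₁ θ₂ s : ℝ) (N' : ℕ)

lemma log_factorial_ge (n : ℕ) (hn : 1 ≤ n) :
    (n:ℝ) * (Real.log n - Real.log 3) ≤ Real.log (Nat.factorial n) := by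
  have hX0 : (0:ℝ) < n := by exact_mod_cast hn
  have hF0 : (0:ℝ) < (Nat.factorial n : ℝ) := by exact_mod_cast n.factorial_pos
  have h := pow_le_three_pow_mul_factorial n
  have hlog := Real.log_le_log (by positivity) h
  rw [Real.log_pow, Real.log_mul (by positivity) (ne_of_gt hF0), Real.log_pow] at hlog
  have : (n:ℝ) * Real.log n ≤ n * Real.log 3 + Real.log (Nat.factorial n) := by
    exact_mod_cast hlog
  ring_nf
  ring_nf at this
  linarith

lemma log_dn_le (hθ₁ : 0 ≤ θ₁) (hN' : 2 ≤ N') (n : ℕ) :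
    Real.log (dn θ₁ N' n) ≤ -(2*θ₁) * Real.log (Nat.factorial n)
      + 2*θ₁*(N':ℝ)*Real.log N' := by
  have hne : ∀ i ∈ Finset.range n, wt θ₁ N' i ≠ 0 := fun i _ => (wt_pos θ₁ N' i).ne'
  rw [dn, Real.log_prod hne]
  have hterm : ∀ i ∈ Finset.range n, Real.log (wt θ₁ N' i)
      ≤ -(2*θ₁) * Real.log ((i:ℕ)+1:ℝ) + (if i+1 < N' then 2*θ₁*Real.log ((i:ℕ)+1:ℝ) else 0) := by
    intro i _
    by_cases hN : N' ≤ i+1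
    · rw [wt, if_pos hN, if_neg (by omega), Real.log_rpow (by positivity)]
      ring_nf
      exact le_rfl
    · rw [wt, if_neg hN, if_pos (by omega), Real.log_one]
      ring_nf
      exact le_rfl
  have hsum := Finset.sum_le_sum hterm
  rw [Finset.sum_add_distrib] at hsum
  have h1 : ∑ i ∈ Finset.range n, -(2*θ₁) * Real.log ((i:ℕ)+1:ℝ)
      = -(2*θ₁) * Real.log (Nat.factorial n) := by
    rw [← Finset.mul_sum]
    congr 1
    rw [← Real.log_prod (fun i _ => by positivity)]
    congr 1
    have hp := Finset.prod_range_add_one_eq_factorial n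
    exact_mod_cast congrArg (fun k : ℕ => (k:ℝ)) hp
  have h2 : ∑ i ∈ Finset.range n, (if i+1 < N' then 2*θ₁*Real.log ((i:ℕ)+1:ℝ) else 0)
      ≤ 2*θ₁*(N':ℝ)*Real.log N' := by
    have hbound : ∀ i ∈ Finset.range n, (if i+1 < N' then 2*θ₁*Real.log ((i:ℕ)+1:ℝ) else 0)
        ≤ (if i+1 < N' then 2*θ₁*Real.log (N':ℝ) else 0) := by
      intro i _
      by_cases h : i+1 < N'
      · rw [if_pos h, if_pos h]
        have : Real.log ((i:ℕ)+1:ℝ) ≤ Real.log (N':ℝ) := by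
          apply Real.log_le_log (by positivity)
          exact_mod_cast Nat.le_of_lt h
        nlinarith
      · rw [if_neg h, if_neg h]
    refine (Finset.sum_le_sum hbound).trans ?_
    rw [← Finset.sum_filter, Finset.sum_const, nsmul_eq_mul]
    have hcard : (((Finset.range n).filter (fun i => i+1 < N')).card : ℝ) ≤ (N' : ℝ) := by
      have hsub : ((Finset.range n).filter (fun i => i+1 < N')) ⊆ Finset.range N' := by
        intro i hi
        simp only [Finset.mem_filter, Finset.mem_range] at hi ⊢
        omega
      have := Finset.card_le_card hsub
      rw [Finset.card_range] at this
      exact_mod_cast this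
    have hc0 : 0 ≤ 2*θ₁*Real.log (N':ℝ) := by
      have : (1:ℝ) ≤ (N':ℝ) := by exact_mod_cast (by omega : 1 ≤ N')
      have := Real.log_nonneg this
      positivity
    nlinarith
  calc ∑ i ∈ Finset.range n, Real.log (wt θ₁ N' i) ≤ _ := hsum
    _ ≤ -(2*θ₁) * Real.log (Nat.factorial n) + 2*θ₁*(N':ℝ)*Real.log N' := by
        rw [h1]; linarith

lemma log_cardA_le (hθ₂ : 1 ≤ θ₂) (n : ℕ) (hn : 1 ≤ n)
    (hcard : 1 ≤ (Aset θ₁ θ₂ N' n).card) :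
    Real.log ((Aset θ₁ θ₂ N' n).card)
      ≤ (n:ℝ) * (Real.log 2 + θ₂ * Real.log n) - Real.log (Nat.factorial n) := by
  have hX0 : (0:ℝ) < n := by exact_mod_cast hn
  have hX1 : (1:ℝ) ≤ (n:ℝ) := by exact_mod_cast hn
  have hF0 : (0:ℝ) < (Nat.factorial n : ℝ) := by exact_mod_cast n.factorial_pos
  have hM : ((Mn θ₂ n + n : ℕ) : ℝ) ≤ 2 * (n:ℝ)^θ₂ := by
    push_cast
    have h1 : ((Mn θ₂ n : ℕ):ℝ) ≤ (n:ℝ)^θ₂ := Nat.floor_le (by positivity)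
    have h2 : (n:ℝ) ≤ (n:ℝ)^θ₂ := by
      nth_rewrite 1 [← Real.rpow_one (n:ℝ)]
      exact Real.rpow_le_rpow_of_exponent_le hX1 hθ₂
    linarith
  have hch : ((Aset θ₁ θ₂ N' n).card : ℝ) ≤ ((Mn θ₂ n + n:ℕ):ℝ)^n / (Nat.factorial n : ℝ) := by
    calc ((Aset θ₁ θ₂ N' n).card : ℝ) ≤ ((Mn θ₂ n + n).choose n : ℝ) := by
          exact_mod_cast card_Aset_le θ₁ θ₂ N' n
      _ ≤ ((Mn θ₂ n + n:ℕ):ℝ)^n / (Nat.factorial n : ℝ) := Nat.choose_le_pow_div n _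
  have hc0 : (0:ℝ) < ((Aset θ₁ θ₂ N' n).card : ℝ) := by exact_mod_cast hcard
  have hb : ((Aset θ₁ θ₂ N' n).card : ℝ) ≤ (2 * (n:ℝ)^θ₂)^n / (Nat.factorial n : ℝ) := by
    refine hch.trans ?_
    gcongr
  have hlog := Real.log_le_log hc0 hb
  rw [Real.log_div (by positivity) (ne_of_gt hF0), Real.log_pow,
    Real.log_mul (by norm_num) (by positivity), Real.log_rpow hX0] at hlog
  calc Real.log ((Aset θ₁ θ₂ N' n).card) ≤ _ := hlog
    _ = (n:ℝ) * (Real.log 2 + θ₂ * Real.log n) - Real.log (Nat.factorial n) := by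
        push_cast; ring

lemma main_ev (hθ₁ : 1/2 ≤ θ₁) (hθ₂ : 1 ≤ θ₂) (hs : 0 ≤ s) (hN' : 2 ≤ N')
    (hγ : θ₂ - 1 - 2*θ₁*s < 0) :
    ∀ᶠ n : ℕ in atTop, (((Aset θ₁ θ₂ N' n).card) : ℝ) * dn θ₁ N' n ^ s ≤ (1/2:ℝ)^n := by
  have hθ0 : (0:ℝ) ≤ θ₁ := by linarith
  have hcK0 : 0 ≤ 2*θ₁*(N':ℝ)*Real.log N' := by
    have h1 : (1:ℝ) ≤ (N':ℝ) := by exact_mod_cast (by omega : 1 ≤ N')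
    have := Real.log_nonneg h1
    positivity
  have hc₂0 : 0 ≤ s * (2*θ₁*(N':ℝ)*Real.log N') := mul_nonneg hs hcK0
  have hlogtend : Tendsto (fun n : ℕ => Real.log n) atTop atTop :=
    Real.tendsto_log_atTop.comp tendsto_natCast_atTop_atTop
  filter_upwards [eventually_ge_atTop 3, hlogtend.eventually_ge_atTop
    (((2*Real.log 2 + (1+2*θ₁*s)*Real.log 3) + s * (2*θ₁*(N':ℝ)*Real.log N'))
      / (-(θ₂ - 1 - 2*θ₁*s)))] with n hn3 hlogn
  have hn1 : 1 ≤ n := by omega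
  have hX0 : (0:ℝ) < n := by exact_mod_cast hn1
  have hF0 : (0:ℝ) < (Nat.factorial n : ℝ) := by exact_mod_cast n.factorial_pos
  have hd0 : 0 < dn θ₁ N' n := dn_pos θ₁ N' n
  rcases Nat.eq_zero_or_pos ((Aset θ₁ θ₂ N' n).card) with hc0 | hc0
  · rw [hc0]; push_cast; rw [zero_mul]; positivity
  have hcR : (0:ℝ) < ((Aset θ₁ θ₂ N' n).card : ℝ) := by exact_mod_cast hc0
  have hA := log_factorial_ge n hn1
  have hB := log_dn_le θ₁ N' hθ0 hN' n
  have hC := log_cardA_le θ₁ θ₂ N' hθ₂ n hn1 hc0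
  have hL : Real.log (((Aset θ₁ θ₂ N' n).card : ℝ) * dn θ₁ N' n ^ s)
      = Real.log ((Aset θ₁ θ₂ N' n).card) + s * Real.log (dn θ₁ N' n) := by
    rw [Real.log_mul (ne_of_gt hcR) (by positivity), Real.log_rpow hd0]
  have hγ0 : (0:ℝ) < -(θ₂ - 1 - 2*θ₁*s) := by linarith
  have hglX : (2*Real.log 2 + (1+2*θ₁*s)*Real.log 3) + s * (2*θ₁*(N':ℝ)*Real.log N')
      ≤ (-(θ₂ - 1 - 2*θ₁*s)) * Real.log n := by
    rw [div_le_iff₀ hγ0] at hlogn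
    linarith
  have hn0R : (0:ℝ) ≤ (n:ℝ) := hX0.le
  have hn1R : (1:ℝ) ≤ (n:ℝ) := by exact_mod_cast hn1
  have h6 := mul_le_mul_of_nonneg_left hglX hn0R
  have h7 : 1 * (s * (2*θ₁*(N':ℝ)*Real.log N')) ≤ (n:ℝ) * (s * (2*θ₁*(N':ℝ)*Real.log N')) :=
    mul_le_mul_of_nonneg_right hn1R hc₂0
  have hsB : s * Real.log (dn θ₁ N' n)
      ≤ s * (-(2*θ₁) * Real.log (Nat.factorial n) + 2*θ₁*(N':ℝ)*Real.log N') :=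
    mul_le_mul_of_nonneg_left hB hs
  have hpF : (1+2*θ₁*s) * ((n:ℝ) * (Real.log n - Real.log 3))
      ≤ (1+2*θ₁*s) * Real.log (Nat.factorial n) :=
    mul_le_mul_of_nonneg_left hA (by nlinarith)
  have hkey : Real.log (((Aset θ₁ θ₂ N' n).card : ℝ) * dn θ₁ N' n ^ s) ≤ -(n:ℝ) * Real.log 2 := by
    rw [hL]
    nlinarith [h6, h7, hsB, hpF, hC]
  have hpos : (0:ℝ) < ((Aset θ₁ θ₂ N' n).card : ℝ) * dn θ₁ N' n ^ s := by positivity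
  have hhalf : Real.log ((1/2:ℝ)^n) = -(n:ℝ) * Real.log 2 := by
    rw [Real.log_pow]
    push_cast
    rw [show (1/2:ℝ) = 2⁻¹ by norm_num, Real.log_inv]
    ring
  rw [← hhalf] at hkey
  exact (Real.log_le_log_iff hpos (by positivity)).1 hkey
end

section
variable {θ₁ θ₂ s : ℝ} {N' : ℕ}

def Tset (θ₁ θ₂ : ℝ) (N' : ℕ) : Set ℝ :=
  {x : ℝ | x ∈ Set.Ico (0:ℝ) 1 ∧ Monotone (fun i => cfA (i+1) x) ∧ 1 ≤ cfA 1 x ∧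
     (∀ n, N' ≤ n → ((n:ℝ))^θ₁ ≤ (cfA n x : ℝ)) ∧
     (∀ m, ∃ n, m ≤ n ∧ (cfA n x : ℝ) ≤ (n:ℝ)^θ₂)}

lemma mem_cover {x : ℝ} (hx : x ∈ Tset θ₁ θ₂ N') (n : ℕ) (hn1 : 1 ≤ n) (hn : N' ≤ n)
    (hub : (cfA n x : ℝ) ≤ (n:ℝ)^θ₂) :
    (fun i : Fin n => cfA ((i:ℕ)+1) x) ∈ Aset θ₁ θ₂ N' n ∧ x ∈ cyl n (fun i => cfA ((i:ℕ)+1) x) := by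
  obtain ⟨hI, hmono, h1, hlb, _⟩ := hx
  constructor
  · rw [Aset, Finset.mem_filter]
    refine ⟨?_, fun i j hij => hmono (by exact_mod_cast hij), fun i hi => by exact_mod_cast hlb _ hi⟩
    rw [Fintype.mem_piFinset]
    intro i
    rw [Finset.mem_Icc]
    constructor
    · calc 1 ≤ cfA (0+1) x := h1
        _ ≤ cfA ((i:ℕ)+1) x := hmono (Nat.zero_le _)
    · have hle : cfA ((i:ℕ)+1) x ≤ cfA n x := by
        have : (i:ℕ)+1 ≤ n := i.2
        have h := hmono (show (i:ℕ) ≤ n - 1 by omega)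
        simpa [Nat.sub_add_cancel hn1] using h
      exact hle.trans (Nat.le_floor hub)
  · exact ⟨hI, fun i => rfl⟩

lemma core_measure_zero (hθ₁ : 1/2 ≤ θ₁) (hθ₂ : 1 ≤ θ₂) (hs : 0 ≤ s) (hN' : 2 ≤ N')
    (hγ : θ₂ - 1 - 2*θ₁*s < 0) : μH[s] (Tset θ₁ θ₂ N') = 0 := by
  have hθ0 : (0:ℝ) ≤ θ₁ := by linarith
  set q : ℝ≥0∞ := ENNReal.ofReal (1/2) with hq
  have hq1 : q < 1 := by rw [hq, ENNReal.ofReal_lt_one]; norm_num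
  have hC : (1 - q)⁻¹ ≠ ⊤ := by
    rw [Ne, ENNReal.inv_eq_top, tsub_eq_zero_iff_le]
    exact fun h => (lt_irrefl _ (lt_of_lt_of_le hq1 h))
  -- covering families
  have hcover := Measure.hausdorffMeasure_le_liminf_tsum
    (ι := fun m => Σ k : ℕ, {a : Fin (m+k) → ℕ // a ∈ Aset θ₁ θ₂ N' (m+k)}) s (Tset θ₁ θ₂ N')
    (l := atTop)
    (fun m => ENNReal.ofReal ((2:ℝ)^N' * (1/2)^m))
    (by
      have h0 : Tendsto (fun m : ℕ => (2:ℝ)^N' * (1/2)^m) atTop (𝓝 0) := by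
        simpa using (tendsto_pow_atTop_nhds_zero_of_lt_one (by norm_num : (0:ℝ) ≤ 1/2)
          (by norm_num : (1/2:ℝ) < 1)).const_mul ((2:ℝ)^N')
      simpa using ENNReal.tendsto_ofReal h0)
    (fun m i => cyl (m + i.1) i.2.1)
    (by
      filter_upwards with m
      rintro ⟨k, a, ha⟩
      refine (diam_cyl_le hθ0 ha).trans ?_
      apply ENNReal.ofReal_le_ofReal
      refine (dn_le_geom hθ₁ hN' (m+k)).trans ?_
      have hpw : ((1/2:ℝ))^(m+k) ≤ (1/2)^m :=
        pow_le_pow_of_le_one (by norm_num) (by norm_num) (by omega)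
      have h2 : (0:ℝ) ≤ 2^N' := by positivity
      nlinarith)
    (by
      filter_upwards with m
      intro x hx
      obtain ⟨n, hn, hub⟩ := hx.2.2.2.2 (max m N')
      obtain ⟨k, rfl⟩ : ∃ k, n = m + k := ⟨n - m, by omega⟩
      obtain ⟨ha, hxa⟩ := mem_cover hx (m+k) (by omega) (le_trans (le_max_right m N') hn) hub
      exact mem_iUnion.2 ⟨⟨k, ⟨_, ha⟩⟩, hxa⟩)
  refine le_antisymm (le_trans hcover ?_) (by positivity)
  -- bound the liminf
  obtain ⟨n₁, hn₁⟩ := eventually_atTop.1 (main_ev θ₁ θ₂ s N' hθ₁ hθ₂ hs hN' hγ)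
  have hbound : ∀ᶠ m : ℕ in atTop,
      (∑' i : Σ k : ℕ, {a : Fin (m+k) → ℕ // a ∈ Aset θ₁ θ₂ N' (m+k)},
        EMetric.diam (cyl (m + i.1) i.2.1) ^ s) ≤ q^m * (1-q)⁻¹ := by
    filter_upwards [eventually_ge_atTop n₁] with m hm
    have hlev : ∀ k : ℕ,
        (∑' a : {a : Fin (m+k) → ℕ // a ∈ Aset θ₁ θ₂ N' (m+k)},
          EMetric.diam (cyl (m+k) a.1) ^ s) ≤ q^(m+k) := by
      intro k
      have h1 : ∀ a : {a : Fin (m+k) → ℕ // a ∈ Aset θ₁ θ₂ N' (m+k)},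
          EMetric.diam (cyl (m+k) a.1) ^ s ≤ ENNReal.ofReal (dn θ₁ N' (m+k) ^ s) := by
        intro a
        rw [← ENNReal.ofReal_rpow_of_nonneg (dn_pos θ₁ N' (m+k)).le hs]
        exact ENNReal.rpow_le_rpow (diam_cyl_le hθ0 a.2) hs
      calc (∑' a : {a : Fin (m+k) → ℕ // a ∈ Aset θ₁ θ₂ N' (m+k)},
              EMetric.diam (cyl (m+k) a.1) ^ s)
          ≤ ∑' _a : {a : Fin (m+k) → ℕ // a ∈ Aset θ₁ θ₂ N' (m+k)},
              ENNReal.ofReal (dn θ₁ N' (m+k) ^ s) := ENNReal.tsum_le_tsum h1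
        _ = ((Aset θ₁ θ₂ N' (m+k)).card : ℝ≥0∞) * ENNReal.ofReal (dn θ₁ N' (m+k) ^ s) := by
            rw [tsum_fintype, Finset.sum_const, Finset.card_univ, Fintype.card_coe, nsmul_eq_mul]
        _ = ENNReal.ofReal (((Aset θ₁ θ₂ N' (m+k)).card : ℝ) * dn θ₁ N' (m+k) ^ s) := by
            rw [ENNReal.ofReal_mul (by positivity), ENNReal.ofReal_natCast]
        _ ≤ ENNReal.ofReal ((1/2:ℝ)^(m+k)) := ENNReal.ofReal_le_ofReal (hn₁ (m+k) (by omega))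
        _ = q^(m+k) := by rw [hq, ← ENNReal.ofReal_pow (by norm_num)]
    calc (∑' i : Σ k : ℕ, {a : Fin (m+k) → ℕ // a ∈ Aset θ₁ θ₂ N' (m+k)},
            EMetric.diam (cyl (m + i.1) i.2.1) ^ s)
        = ∑' (k : ℕ) (a : {a : Fin (m+k) → ℕ // a ∈ Aset θ₁ θ₂ N' (m+k)}),
            EMetric.diam (cyl (m+k) a.1) ^ s := ENNReal.tsum_sigma' _
      _ ≤ ∑' k : ℕ, q^(m+k) := ENNReal.tsum_le_tsum hlev
      _ = q^m * (1-q)⁻¹ := by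
          simp only [pow_add, ENNReal.tsum_mul_left, ENNReal.tsum_geometric]
  have hG : Tendsto (fun m : ℕ => q^m * (1-q)⁻¹) atTop (𝓝 0) := by
    have h0 : Tendsto (fun m : ℕ => q^m) atTop (𝓝 0) :=
      ENNReal.tendsto_pow_atTop_nhds_zero_of_lt_one hq1
    simpa using ENNReal.Tendsto.mul_const h0 (Or.inr hC)
  calc liminf (fun m : ℕ => ∑' i : Σ k : ℕ, {a : Fin (m+k) → ℕ // a ∈ Aset θ₁ θ₂ N' (m+k)},
          EMetric.diam (cyl (m + i.1) i.2.1) ^ s) atTop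
      ≤ liminf (fun m : ℕ => q^m * (1-q)⁻¹) atTop := liminf_le_liminf hbound
    _ = 0 := hG.liminf_eq
end

/-- For `1 ≤ α₁ ≤ α₂`, the set of `x ∈ Λ` with
`α₁ ≤ liminf (log aₙ(x))/(log n) ≤ α₂` has Hausdorff dimension at most
`(α₂ - 1)/(2α₁)`. -/
theorem dimH_liminf_between_le (α₁ α₂ : ℝ) (h1 : 1 ≤ α₁) (h12 : α₁ ≤ α₂) :
    dimH {x | x ∈ Lam ∧
        (α₁ : EReal) ≤
          Filter.liminf (fun n : ℕ => ((Real.log (cfA n x) / Real.log n : ℝ) : EReal)) atTop ∧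
        Filter.liminf (fun n : ℕ => ((Real.log (cfA n x) / Real.log n : ℝ) : EReal)) atTop ≤
          (α₂ : EReal)} ≤
      ENNReal.ofReal ((α₂ - 1) / (2 * α₁)) := by
  set S := {x | x ∈ Lam ∧
        (α₁ : EReal) ≤
          Filter.liminf (fun n : ℕ => ((Real.log (cfA n x) / Real.log n : ℝ) : EReal)) atTop ∧
        Filter.liminf (fun n : ℕ => ((Real.log (cfA n x) / Real.log n : ℝ) : EReal)) atTop ≤
          (α₂ : EReal)} with hS
  apply dimH_le
  intro d' htop
  by_contra hlt
  rw [not_le] at hlt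
  -- extract real inequality
  have hc0 : 0 ≤ (α₂ - 1) / (2 * α₁) := by
    apply div_nonneg <;> linarith
  have hsc : (α₂ - 1) / (2 * α₁) < ((d' : ℝ≥0) : ℝ) := by
    by_contra hcon
    rw [not_lt] at hcon
    have : ((d' : ℝ≥0) : ℝ≥0∞) ≤ ENNReal.ofReal ((α₂ - 1) / (2 * α₁)) := by
      rw [← ENNReal.ofReal_coe_nnreal]
      exact ENNReal.ofReal_le_ofReal hcon
    exact absurd hlt (not_lt.2 this)
  set s : ℝ := ((d' : ℝ≥0) : ℝ) with hsdef
  have hs0 : 0 ≤ s := d'.2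
  -- choose ε
  have hα₁ : (0:ℝ) < 2 * α₁ := by linarith
  have hδ : 0 < 2*s*α₁ - (α₂ - 1) := by
    rw [div_lt_iff₀ hα₁] at hsc
    nlinarith
  set δ := 2*s*α₁ - (α₂ - 1) with hδdef
  set ε := min (δ/(2*(1+2*s))) (1/2) with hεdef
  have hε0 : 0 < ε := lt_min (by positivity) (by norm_num)
  have hεhalf : ε ≤ 1/2 := min_le_right _ _
  have hεδ : ε * (1+2*s) ≤ δ/2 := by
    have h := min_le_left (δ/(2*(1+2*s))) (1/2)
    rw [hεdef] at *
    have h2s : (0:ℝ) < 1+2*s := by linarith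
    calc (min (δ/(2*(1+2*s))) (1/2)) * (1+2*s) ≤ (δ/(2*(1+2*s))) * (1+2*s) := by
          apply mul_le_mul_of_nonneg_right h h2s.le
      _ = δ/2 := by field_simp
  set θ₁ := α₁ - ε with hθ₁def
  set θ₂ := α₂ + ε with hθ₂def
  have hθ₁h : 1/2 ≤ θ₁ := by rw [hθ₁def]; linarith
  have hθ₂h : 1 ≤ θ₂ := by rw [hθ₂def]; linarith
  have hγ : θ₂ - 1 - 2*θ₁*s < 0 := by
    rw [hθ₁def, hθ₂def]
    nlinarith
  -- S is covered by the union of the Tsets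
  have hsub : S ⊆ ⋃ N : ℕ, Tset θ₁ θ₂ (N+2) := by
    intro x hx
    obtain ⟨⟨hIoo, hmono'⟩, hli₁, hli₂⟩ := hx
    have hx0 : 0 < x := hIoo.1
    have hx1 : x < 1 := hIoo.2
    have hmono : Monotone (fun i : ℕ => cfA (i+1) x) :=
      monotone_nat_of_le_succ fun i => hmono' (i+1) (by omega)
    have hcf1 : 1 ≤ cfA 1 x := by
      have : (1:ℝ) ≤ x⁻¹ := by
        rw [le_inv_comm₀ one_pos hx0]; simpa using hx1.le
      have h2 : (1:ℕ) ≤ ⌊x⁻¹⌋₊ := Nat.le_floor (by exact_mod_cast this)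
      simpa [cfA] using h2
    -- eventual lower bound
    have hevlb : ∀ᶠ n : ℕ in atTop, ((n:ℝ))^θ₁ ≤ (cfA n x : ℝ) := by
      have hlt : ((θ₁ : ℝ) : EReal) <
          Filter.liminf (fun n : ℕ => ((Real.log (cfA n x) / Real.log n : ℝ) : EReal)) atTop :=
        lt_of_lt_of_le (by exact_mod_cast (show θ₁ < α₁ by rw [hθ₁def]; linarith)) hli₁
      filter_upwards [eventually_lt_of_lt_liminf hlt, eventually_ge_atTop 2] with n hn hn2
      have hn1R : (1:ℝ) < (n:ℝ) := by exact_mod_cast hn2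
      have hlogn : 0 < Real.log n := Real.log_pos hn1R
      have hreal : θ₁ < Real.log (cfA n x) / Real.log n := by exact_mod_cast hn
      have hlog2 : θ₁ * Real.log n < Real.log (cfA n x) := (lt_div_iff₀ hlogn).1 hreal
      have hcfpos : 0 < (cfA n x : ℝ) := by
        by_contra hz
        rw [not_lt] at hz
        have : (cfA n x : ℝ) = 0 := le_antisymm hz (by positivity)
        rw [this, Real.log_zero] at hlog2
        nlinarith
      calc ((n:ℝ))^θ₁ = Real.exp (θ₁ * Real.log n) := by
            rw [Real.rpow_def_of_pos (by positivity)]; ring_nf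
        _ ≤ Real.exp (Real.log (cfA n x)) := by
            apply Real.exp_le_exp.2 hlog2.le
        _ = (cfA n x : ℝ) := Real.exp_log hcfpos
    obtain ⟨N₀, hN₀⟩ := eventually_atTop.1 hevlb
    refine mem_iUnion.2 ⟨N₀, ⟨⟨hx0.le, hx1⟩, hmono, hcf1, fun n hn => hN₀ n (by omega), ?_⟩⟩
    -- frequent upper bound
    intro m
    have hlt2 : Filter.liminf (fun n : ℕ => ((Real.log (cfA n x) / Real.log n : ℝ) : EReal)) atTop
        < ((θ₂ : ℝ) : EReal) :=
      lt_of_le_of_lt hli₂ (by exact_mod_cast (show α₂ < θ₂ by rw [hθ₂def]; linarith))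
    have hfreq := (frequently_lt_of_liminf_lt (by isBoundedDefault) hlt2).and_eventually (eventually_ge_atTop (max m 2))
    obtain ⟨n, hn, hnm⟩ := hfreq.exists
    refine ⟨n, le_trans (le_max_left m 2) hnm, ?_⟩
    have hn2 : 2 ≤ n := le_trans (le_max_right m 2) hnm
    have hn1R : (1:ℝ) < (n:ℝ) := by exact_mod_cast hn2
    have hlogn : 0 < Real.log n := Real.log_pos hn1R
    have hreal : Real.log (cfA n x) / Real.log n < θ₂ := by exact_mod_cast hn
    have hlog2 : Real.log (cfA n x) < θ₂ * Real.log n := (div_lt_iff₀ hlogn).1 hreal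
    rcases Nat.eq_zero_or_pos (cfA n x) with hz | hpos
    · rw [hz]; push_cast; positivity
    · have hcfpos : 0 < (cfA n x : ℝ) := by exact_mod_cast hpos
      calc (cfA n x : ℝ) = Real.exp (Real.log (cfA n x)) := (Real.exp_log hcfpos).symm
        _ ≤ Real.exp (θ₂ * Real.log n) := Real.exp_le_exp.2 hlog2.le
        _ = ((n:ℝ))^θ₂ := by rw [Real.rpow_def_of_pos (by positivity)]; ring_nf
  -- conclude
  have hzero : μH[s] S = 0 := by
    refine measure_mono_null hsub ?_
    refine measure_iUnion_null fun N => ?_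
    exact core_measure_zero hθ₁h hθ₂h hs0 (by omega) hγ
  rw [hzero] at htop
  exact ENNReal.zero_ne_top htop
end

section
/- Let ψ : ℕ → ℝ⁺ be a function with ψ(n) → ∞. Then the set E(Λ,ψ) = {x ∈ Λ : lim_{n→∞} (log a_n(x))/ψ(n) = 1} is non-empty if and only if ψ is equivalent to a non-decreasing function (i.e., there exists a non-decreasing ψ̃ : ℕ → ℝ⁺ with ψ(n)/ψ̃(n) → 1). -/
open Filter MeasureTheory Set

namespace CFAux

/-- finite truncation `[0; b k, b (k+1), ..., b (k+N-1)]`. -/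
noncomputable def approx (b : ℕ → ℕ) : ℕ → ℕ → ℝ
  | _, 0 => 0
  | k, (N+1) => ((b k : ℝ) + approx b (k+1) N)⁻¹

variable {b : ℕ → ℕ} (hb : ∀ n, 2 ≤ b n)

include hb in
lemma approx_mem (N k : ℕ) : approx b k N ∈ Set.Icc (0:ℝ) 1 := by
  induction N generalizing k with
  | zero => simp [approx]
  | succ N ih =>
    have h2 : (2:ℝ) ≤ (b k : ℝ) := by exact_mod_cast hb k
    have h0 : (0:ℝ) ≤ approx b (k+1) N := (ih (k+1)).1
    have hpos : (0:ℝ) < (b k : ℝ) + approx b (k+1) N := by linarith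
    constructor
    · simp only [approx]; positivity
    · simp only [approx]
      rw [inv_le_one_iff₀]
      right; linarith

lemma step_contract {c : ℕ} (hc : 2 ≤ c) {s t : ℝ} (hs : s ∈ Set.Icc (0:ℝ) 1)
    (ht : t ∈ Set.Icc (0:ℝ) 1) :
    |((c:ℝ) + s)⁻¹ - ((c:ℝ) + t)⁻¹| ≤ |s - t| / 4 := by
  have h2 : (2:ℝ) ≤ (c : ℝ) := by exact_mod_cast hc
  have hs0 := hs.1
  have ht0 := ht.1
  have hps : (0:ℝ) < (c:ℝ) + s := by linarith
  have hpt : (0:ℝ) < (c:ℝ) + t := by linarith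
  have key : ((c:ℝ) + s)⁻¹ - ((c:ℝ) + t)⁻¹ = (t - s) / (((c:ℝ) + s) * ((c:ℝ) + t)) := by
    field_simp
    ring
  rw [key, abs_div, abs_sub_comm t s, abs_of_pos (mul_pos hps hpt),
    div_le_div_iff₀ (mul_pos hps hpt) (by norm_num : (0:ℝ) < 4)]
  have h4 : (4:ℝ) ≤ ((c:ℝ) + s) * ((c:ℝ) + t) := by nlinarith
  nlinarith [abs_nonneg (s - t)]

include hb in
lemma approx_dist (N : ℕ) : ∀ k M, |approx b k (N + M) - approx b k N| ≤ (1/4 : ℝ)^N := by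
  induction N with
  | zero =>
    intro k M
    simp only [Nat.zero_add, pow_zero]
    have h := approx_mem hb M k
    simp only [approx, sub_zero]
    rw [abs_of_nonneg h.1]; exact h.2
  | succ N ih =>
    intro k M
    have : N + 1 + M = (N + M) + 1 := by ring
    rw [this]
    simp only [approx]
    calc |((b k:ℝ) + approx b (k+1) (N+M))⁻¹ - ((b k:ℝ) + approx b (k+1) N)⁻¹|
        ≤ |approx b (k+1) (N+M) - approx b (k+1) N| / 4 :=
          step_contract (hb k) (approx_mem hb _ _) (approx_mem hb _ _)
      _ ≤ (1/4:ℝ)^N / 4 := by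
          have := ih (k+1) M
          linarith
      _ = (1/4:ℝ)^(N+1) := by ring

include hb in
lemma approx_cauchy (k : ℕ) : CauchySeq (fun N => approx b k N) := by
  apply cauchySeq_of_le_geometric (1/4 : ℝ) 1 (by norm_num)
  intro N
  have := approx_dist hb N k 1
  rw [Real.dist_eq, one_mul]
  rw [abs_sub_comm]
  exact this

/-- The value `[0; b k, b (k+1), ...]`. -/
noncomputable def val (b : ℕ → ℕ) (k : ℕ) : ℝ := limUnder atTop (fun N => approx b k N)

include hb

include hb in
lemma tendsto_val (k : ℕ) : Tendsto (fun N => approx b k N) atTop (nhds (val b k)) :=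
  (approx_cauchy hb k).tendsto_limUnder

include hb in
lemma val_mem (k : ℕ) : val b k ∈ Set.Icc (0:ℝ) 1 := by
  constructor
  · exact ge_of_tendsto (tendsto_val hb k) (Eventually.of_forall fun N => (approx_mem hb N k).1)
  · exact le_of_tendsto (tendsto_val hb k) (Eventually.of_forall fun N => (approx_mem hb N k).2)

include hb in
lemma val_rec (k : ℕ) : val b k = ((b k : ℝ) + val b (k+1))⁻¹ := by
  have h2 : (2:ℝ) ≤ (b k : ℝ) := by exact_mod_cast hb k
  have hne : (b k : ℝ) + val b (k+1) ≠ 0 := by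
    have := (val_mem hb (k+1)).1; positivity
  have h1 : Tendsto (fun N => approx b k (N+1)) atTop (nhds (val b k)) :=
    (tendsto_val hb k).comp (tendsto_add_atTop_nat 1)
  have h2' : Tendsto (fun N => ((b k : ℝ) + approx b (k+1) N)⁻¹) atTop
      (nhds (((b k : ℝ) + val b (k+1))⁻¹)) :=
    ((tendsto_const_nhds.add (tendsto_val hb (k+1))).inv₀ hne)
  have heq : (fun N => approx b k (N+1)) = (fun N => ((b k : ℝ) + approx b (k+1) N)⁻¹) := by
    funext N; rfl
  rw [heq] at h1
  exact tendsto_nhds_unique h1 h2'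

include hb in
lemma val_pos (k : ℕ) : 0 < val b k := by
  rw [val_rec hb]
  have h2 : (2:ℝ) ≤ (b k : ℝ) := by exact_mod_cast hb k
  have := (val_mem hb (k+1)).1
  positivity

include hb in
lemma val_lt_one (k : ℕ) : val b k < 1 := by
  rw [val_rec hb]
  have h2 : (2:ℝ) ≤ (b k : ℝ) := by exact_mod_cast hb k
  have h0 := (val_mem hb (k+1)).1
  have : (2:ℝ) ≤ (b k : ℝ) + val b (k+1) := by linarith
  calc ((b k : ℝ) + val b (k+1))⁻¹ ≤ 2⁻¹ := by
        apply inv_anti₀ (by norm_num) this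
    _ < 1 := by norm_num

include hb in
lemma inv_val (k : ℕ) : (val b k)⁻¹ = (b k : ℝ) + val b (k+1) := by
  rw [val_rec hb, inv_inv]

include hb in
lemma gauss_val (k : ℕ) : gaussMap (val b k) = val b (k+1) := by
  unfold gaussMap
  rw [inv_val hb]
  have : ((b k : ℝ)) = ((b k : ℤ) : ℝ) := by push_cast; ring
  rw [this, Int.fract_intCast_add, Int.fract_eq_self.2 ⟨(val_pos hb (k+1)).le, val_lt_one hb (k+1)⟩]

include hb in
lemma iterate_gauss_val (n : ℕ) : gaussMap^[n] (val b 0) = val b n := by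
  induction n with
  | zero => rfl
  | succ n ih => rw [Function.iterate_succ_apply', ih, gauss_val hb]

include hb in
lemma floor_inv_val (k : ℕ) : ⌊(val b k)⁻¹⌋₊ = b k := by
  rw [inv_val hb]
  have h0 := (val_pos hb (k+1)).le
  have h1 := val_lt_one hb (k+1)
  rw [Nat.floor_eq_iff (by positivity)]
  constructor
  · linarith
  · linarith

include hb in
lemma cfA_val {n : ℕ} (_ : 1 ≤ n) : cfA n (val b 0) = b (n - 1) := by
  unfold cfA
  rw [iterate_gauss_val hb, floor_inv_val hb]

end CFAux

lemma logNat_nonneg (m : ℕ) : 0 ≤ Real.log m := by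
  rcases Nat.eq_zero_or_pos m with rfl | h
  · simp
  · exact Real.log_nonneg (by exact_mod_cast h)

lemma logNat_mono {m m' : ℕ} (h : m ≤ m') : Real.log m ≤ Real.log m' := by
  rcases Nat.eq_zero_or_pos m with rfl | h0
  · simpa using logNat_nonneg m'
  · exact Real.log_le_log (by exact_mod_cast h0) (by exact_mod_cast h)

/-- `E(Λ,ψ)` is non-empty iff `ψ` is equivalent to a non-decreasing function. -/
theorem E_Lam_nonempty_iff (ψ : ℕ → ℝ) (hψpos : ∀ n, 0 < ψ n)
    (hψ : Tendsto ψ atTop atTop) :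
    ({x | x ∈ Lam ∧
        Tendsto (fun n : ℕ => Real.log (cfA n x) / ψ n) atTop (nhds 1)}.Nonempty) ↔
      ∃ φ : ℕ → ℝ, (∀ n, 0 < φ n) ∧ Monotone φ ∧
        Tendsto (fun n : ℕ => ψ n / φ n) atTop (nhds 1) := by
  constructor
  · rintro ⟨x, ⟨_, hmono⟩, htend⟩
    set L : ℕ → ℝ := fun n => Real.log (cfA n x) with hL
    refine ⟨fun n => max (L n) 1, fun n => lt_of_lt_of_le one_pos (le_max_right _ _), ?_, ?_⟩
    · apply monotone_nat_of_le_succ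
      intro n
      refine max_le_max ?_ le_rfl
      rcases Nat.eq_zero_or_pos n with rfl | hn
      · have h01 : cfA 0 x = cfA 1 x := rfl
        simp only [hL, h01, le_refl]
      · exact logNat_mono (hmono n hn)
    · have hLtop : Tendsto L atTop atTop := by
        have h1 := Tendsto.pos_mul_atTop one_pos htend hψ
        apply h1.congr
        intro n
        exact div_mul_cancel₀ _ (hψpos n).ne'
      have hev : ∀ᶠ n in atTop, max (L n) 1 = L n :=
        (hLtop.eventually_ge_atTop 1).mono fun n h => max_eq_left h
      have hinv : Tendsto (fun n => (L n / ψ n)⁻¹) atTop (nhds 1) := by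
        simpa using htend.inv₀ one_ne_zero
      apply hinv.congr'
      filter_upwards [hev] with n h
      rw [h, inv_div]
  · rintro ⟨φ, hφpos, hφmono, hφψ⟩
    -- φ tends to infinity
    have hφtop : Tendsto φ atTop atTop := by
      have hev : ∀ᶠ n in atTop, ψ n / 2 ≤ φ n := by
        filter_upwards [hφψ.eventually_le_const (by norm_num : (1:ℝ) < 2)] with n h
        rw [div_le_iff₀ (hφpos n)] at h
        linarith
      exact tendsto_atTop_mono' _ hev (hψ.atTop_div_const (by norm_num))
    set b : ℕ → ℕ := fun n => max 2 ⌈Real.exp (φ (n+1))⌉₊ with hbdef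
    have hb : ∀ n, 2 ≤ b n := fun n => le_max_left _ _
    have hbmono : Monotone b := fun m n h =>
      max_le_max le_rfl (Nat.ceil_mono (Real.exp_le_exp.2 (hφmono (Nat.succ_le_succ h))))
    refine ⟨CFAux.val b 0, ⟨⟨CFAux.val_pos hb 0, CFAux.val_lt_one hb 0⟩, ?_⟩, ?_⟩
    · intro n hn
      rw [CFAux.cfA_val hb hn, CFAux.cfA_val hb (le_trans hn (Nat.le_succ n))]
      exact hbmono (by omega)
    · -- squeeze
      have hφev : ∀ᶠ n in atTop, 1 ≤ φ n := hφtop.eventually_ge_atTop 1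
      have hg : Tendsto (fun n => φ n / ψ n) atTop (nhds 1) := by
        have := hφψ.inv₀ one_ne_zero
        simp only [inv_div, inv_one] at this
        exact this
      have hzero : Tendsto (fun n : ℕ => 1 / ψ n) atTop (nhds 0) := by
        simpa [one_div, Function.comp_def] using (tendsto_inv_atTop_zero.comp hψ)
      have hh : Tendsto (fun n => φ n / ψ n + 1 / ψ n) atTop (nhds 1) := by
        simpa using hg.add hzero
      apply tendsto_of_tendsto_of_tendsto_of_le_of_le' hg hh
      · filter_upwards [hφev, eventually_ge_atTop 1] with n h1 hn1
        have hbn : cfA n (CFAux.val b 0) = ⌈Real.exp (φ n)⌉₊ := by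
          rw [CFAux.cfA_val hb hn1, hbdef]
          simp only []
          rw [Nat.sub_add_cancel hn1]
          refine max_eq_right ?_
          have h2 : (2:ℝ) ≤ Real.exp (φ n) := by
            have := Real.add_one_le_exp (φ n)
            linarith
          exact_mod_cast le_trans h2 (Nat.le_ceil _)
        rw [hbn]
        gcongr
        · exact (hψpos n).le
        · calc φ n = Real.log (Real.exp (φ n)) := (Real.log_exp _).symm
            _ ≤ Real.log ⌈Real.exp (φ n)⌉₊ :=
              Real.log_le_log (Real.exp_pos _) (Nat.le_ceil _)
      · filter_upwards [hφev, eventually_ge_atTop 1] with n h1 hn1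
        have hbn : cfA n (CFAux.val b 0) = ⌈Real.exp (φ n)⌉₊ := by
          rw [CFAux.cfA_val hb hn1, hbdef]
          simp only []
          rw [Nat.sub_add_cancel hn1]
          refine max_eq_right ?_
          have h2 : (2:ℝ) ≤ Real.exp (φ n) := by
            have := Real.add_one_le_exp (φ n)
            linarith
          exact_mod_cast le_trans h2 (Nat.le_ceil _)
        rw [hbn, ← add_div]
        gcongr
        · exact (hψpos n).le
        · have hup : (⌈Real.exp (φ n)⌉₊ : ℝ) ≤ Real.exp (φ n + 1) := by
            have h1' : (⌈Real.exp (φ n)⌉₊ : ℝ) < Real.exp (φ n) + 1 :=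
              Nat.ceil_lt_add_one (Real.exp_pos _).le
            have h2 : Real.exp (φ n) + 1 ≤ Real.exp (φ n + 1) := by
              rw [Real.exp_add]
              have he1 : (2:ℝ) ≤ Real.exp 1 := by
                have := Real.add_one_le_exp (1:ℝ)
                linarith
              have hge : (1:ℝ) ≤ Real.exp (φ n) := by
                rw [show (1:ℝ) = Real.exp 0 by simp]
                exact Real.exp_le_exp.2 (by linarith)
              nlinarith
            linarith
          calc Real.log ⌈Real.exp (φ n)⌉₊ ≤ Real.log (Real.exp (φ n + 1)) := by
                apply Real.log_le_log _ hup
                have := Nat.le_ceil (Real.exp (φ n))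
                have := Real.exp_pos (φ n)
                linarith
            _ = φ n + 1 := Real.log_exp _
end

section
/- Let α > 1 and t_n = 2⌊n^{α-1}⌋. Then the set E({t_n}) = {x ∈ (0,1) : n t_n ≤ a_n(x) < (n+1) t_n for all n ≥ 1} is contained in {x ∈ Λ : lim_{n→∞} (log a_n(x))/(α log n) = 1}, and the quantity ξ = limsup_{n→∞} (2 log(n+1)! + log t_{n+1}) / log(t_1 ⋯ t_n) equals 2/(α-1). -/
open Filter MeasureTheory Set

section Aux
open Filter Finset

/-- `n^n ≤ (n!)^2`. -/
lemma aux_pow_le_factorial_sq (n : ℕ) : n ^ n ≤ (n.factorial) ^ 2 := by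
  have h1 : (n.factorial) ^ 2 = ∏ j ∈ range n, (j + 1) * (n - j) := by
    rw [Finset.prod_mul_distrib, Finset.prod_range_add_one_eq_factorial, sq]
    congr 1
    rw [← Finset.prod_range_add_one_eq_factorial,
      ← Finset.prod_range_reflect (fun j => j + 1) n]
    apply Finset.prod_congr rfl
    intro j hj
    rw [Finset.mem_range] at hj
    omega
  rw [h1]
  calc n ^ n = ∏ _j ∈ range n, n := by rw [Finset.prod_const, Finset.card_range]
  _ ≤ ∏ j ∈ range n, (j + 1) * (n - j) := by
    apply Finset.prod_le_prod (fun _ _ => Nat.zero_le _)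
    intro j hj
    rw [Finset.mem_range] at hj
    nlinarith [Nat.sub_add_cancel hj.le, Nat.le_sub_one_of_lt hj]

/-- `(n/2) log n ≤ log n!`. -/
lemma aux_log_factorial_ge (n : ℕ) : (n : ℝ) / 2 * Real.log n ≤ Real.log (n.factorial) := by
  rcases Nat.eq_zero_or_pos n with h | h
  · simp [h]
  have h2 : ((n : ℝ)) ^ (n:ℕ) ≤ ((n.factorial : ℝ)) ^ (2:ℕ) := by
    exact_mod_cast aux_pow_le_factorial_sq n
  have h3 := Real.log_le_log (by positivity) h2
  rw [Real.log_pow, Real.log_pow] at h3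
  push_cast at h3
  linarith

lemma aux_S_tendsto : Tendsto (fun n : ℕ => Real.log (n.factorial)) atTop atTop := by
  apply Real.tendsto_log_atTop.comp
  apply tendsto_atTop_mono (fun n => ?_) tendsto_natCast_atTop_atTop
  exact_mod_cast Nat.self_le_factorial n

/-- `n / log n! → 0`. -/
lemma aux_n_div_S_tendsto :
    Tendsto (fun n : ℕ => (n : ℝ) / Real.log (n.factorial)) atTop (nhds 0) := by
  apply tendsto_of_tendsto_of_tendsto_of_le_of_le' tendsto_const_nhds
    (g := fun _ => (0:ℝ)) (h := fun n : ℕ => 2 / Real.log n)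
  · have : Tendsto (fun n : ℕ => Real.log n) atTop atTop :=
      Real.tendsto_log_atTop.comp tendsto_natCast_atTop_atTop
    have h0 := this.inv_tendsto_atTop.const_mul (2:ℝ)
    simp only [Pi.inv_apply, mul_zero] at h0
    exact h0.congr (fun n => (div_eq_mul_inv _ _).symm)
  · filter_upwards [eventually_ge_atTop 1] with n hn
    have : (0:ℝ) < n.factorial := by positivity
    have : (0:ℝ) ≤ Real.log n.factorial := Real.log_natCast_nonneg _
    positivity
  · filter_upwards [eventually_ge_atTop 2] with n hn
    have hn2 : (2:ℝ) ≤ n := by exact_mod_cast hn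
    have hlogn : 0 < Real.log n := Real.log_pos (by linarith)
    have hS : (n:ℝ)/2 * Real.log n ≤ Real.log n.factorial := aux_log_factorial_ge n
    have hSpos : 0 < Real.log n.factorial := lt_of_lt_of_le (by nlinarith) hS
    rw [div_le_div_iff₀ hSpos hlogn]
    nlinarith

section tbounds
variable {α : ℝ} (hα : 1 < α) {t : ℕ → ℕ} (ht : ∀ n, t n = 2 * ⌊(n : ℝ) ^ (α - 1)⌋₊)
include hα ht

lemma aux_t_lb {k : ℕ} (hk : 1 ≤ k) : (k : ℝ) ^ (α - 1) ≤ t k := by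
  rw [ht]
  have hk1 : (1:ℝ) ≤ (k:ℝ) ^ (α - 1) :=
    Real.one_le_rpow (by exact_mod_cast hk) (by linarith)
  have hf : 1 ≤ ⌊(k : ℝ) ^ (α - 1)⌋₊ := Nat.le_floor (by exact_mod_cast hk1)
  have := Nat.lt_floor_add_one ((k : ℝ) ^ (α - 1))
  push_cast
  have : ((⌊(k : ℝ) ^ (α - 1)⌋₊ : ℝ)) ≥ 1 := by exact_mod_cast hf
  nlinarith [Nat.lt_floor_add_one ((k : ℝ) ^ (α - 1))]

lemma aux_t_ub (k : ℕ) : (t k : ℝ) ≤ 2 * (k : ℝ) ^ (α - 1) := by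
  rw [ht]
  push_cast
  have : (⌊(k : ℝ) ^ (α - 1)⌋₊ : ℝ) ≤ (k : ℝ) ^ (α - 1) := Nat.floor_le (by positivity)
  linarith

lemma aux_t_two {k : ℕ} (hk : 1 ≤ k) : 2 ≤ t k := by
  rw [ht]
  have hk1 : (1:ℝ) ≤ (k:ℝ) ^ (α - 1) :=
    Real.one_le_rpow (by exact_mod_cast hk) (by linarith)
  have hf : 1 ≤ ⌊(k : ℝ) ^ (α - 1)⌋₊ := Nat.le_floor (by exact_mod_cast hk1)
  omega

lemma aux_t_mono (k : ℕ) : t k ≤ t (k + 1) := by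
  rw [ht, ht]
  have : (k : ℝ) ^ (α - 1) ≤ ((k+1 : ℕ) : ℝ) ^ (α - 1) := by
    apply Real.rpow_le_rpow (by positivity) (by push_cast; linarith) (by linarith)
  exact Nat.mul_le_mul_left 2 (Nat.floor_le_floor this)

lemma aux_log_t_lb {k : ℕ} (hk : 1 ≤ k) : (α - 1) * Real.log k ≤ Real.log (t k) := by
  have hkpos : (0:ℝ) < k := by exact_mod_cast hk
  have := Real.log_le_log (by positivity) (aux_t_lb hα ht hk)
  rwa [Real.log_rpow hkpos] at this

lemma aux_log_t_ub {k : ℕ} (hk : 1 ≤ k) :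
    Real.log (t k) ≤ Real.log 2 + (α - 1) * Real.log k := by
  have hkpos : (0:ℝ) < k := by exact_mod_cast hk
  have h2 : (0:ℝ) < t k := by
    have := aux_t_two hα ht hk; positivity
  have := Real.log_le_log h2 (aux_t_ub hα ht k)
  rwa [Real.log_mul (by norm_num) (by positivity), Real.log_rpow hkpos] at this

end tbounds

section part2
variable {α : ℝ} (hα : 1 < α) {t : ℕ → ℕ} (ht : ∀ n, t n = 2 * ⌊(n : ℝ) ^ (α - 1)⌋₊)
include hα ht

lemma aux_L_eq (n : ℕ) :
    Real.log (∏ k ∈ Finset.Icc 1 n, (t k : ℝ)) = ∑ k ∈ Finset.Icc 1 n, Real.log (t k) := by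
  apply Real.log_prod
  intro k hk
  rw [Finset.mem_Icc] at hk
  have := aux_t_two hα ht hk.1
  positivity

lemma aux_S_eq (n : ℕ) :
    Real.log (n.factorial) = ∑ k ∈ Finset.Icc 1 n, Real.log k := by
  rw [← Real.log_prod (fun k hk => by
    rw [Finset.mem_Icc] at hk; have : 0 < k := hk.1; positivity)]
  congr 1
  rw [← Nat.cast_prod]
  congr 1
  rw [← Finset.Ico_add_one_right_eq_Icc, Finset.prod_Ico_id_eq_factorial]

lemma aux_L_lb (n : ℕ) :
    (α - 1) * Real.log (n.factorial) ≤ Real.log (∏ k ∈ Finset.Icc 1 n, (t k : ℝ)) := by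
  rw [aux_L_eq hα ht, aux_S_eq hα ht, Finset.mul_sum]
  apply Finset.sum_le_sum
  intro k hk
  rw [Finset.mem_Icc] at hk
  exact aux_log_t_lb hα ht hk.1

lemma aux_L_ub (n : ℕ) :
    Real.log (∏ k ∈ Finset.Icc 1 n, (t k : ℝ)) ≤
      n * Real.log 2 + (α - 1) * Real.log (n.factorial) := by
  rw [aux_L_eq hα ht, aux_S_eq hα ht, Finset.mul_sum]
  have : (n : ℝ) * Real.log 2 = ∑ _k ∈ Finset.Icc 1 n, Real.log 2 := by
    rw [Finset.sum_const, Nat.card_Icc]; simp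
  rw [this, ← Finset.sum_add_distrib]
  apply Finset.sum_le_sum
  intro k hk
  rw [Finset.mem_Icc] at hk
  exact aux_log_t_ub hα ht hk.1

end part2

section mainlim
variable {α : ℝ} (hα : 1 < α) {t : ℕ → ℕ} (ht : ∀ n, t n = 2 * ⌊(n : ℝ) ^ (α - 1)⌋₊)
include hα ht

lemma aux_lognp1_div_S :
    Tendsto (fun n : ℕ => Real.log (n+1) / Real.log (n.factorial)) atTop (nhds 0) := by
  apply tendsto_of_tendsto_of_tendsto_of_le_of_le' tendsto_const_nhds
    (g := fun _ => (0:ℝ)) (h := fun n : ℕ => 4 / (n:ℝ))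
  · simpa using tendsto_natCast_atTop_atTop (R := ℝ) |>.inv_tendsto_atTop.const_mul (4:ℝ)
      |>.congr (fun n => (div_eq_mul_inv _ _).symm)
  · filter_upwards [eventually_ge_atTop 1] with n hn
    have h1 : (0:ℝ) ≤ Real.log (n+1) := by
      have : ((n:ℝ)+1) = ((n+1 : ℕ) : ℝ) := by push_cast; ring
      rw [this]; exact Real.log_natCast_nonneg _
    have h2 : (0:ℝ) ≤ Real.log n.factorial := Real.log_natCast_nonneg _
    positivity
  · filter_upwards [eventually_ge_atTop 2] with n hn
    have hn2 : (2:ℝ) ≤ n := by exact_mod_cast hn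
    have hlogn : 0 < Real.log n := Real.log_pos (by linarith)
    have hS : (n:ℝ)/2 * Real.log n ≤ Real.log n.factorial := aux_log_factorial_ge n
    have hSpos : 0 < Real.log n.factorial := lt_of_lt_of_le (by nlinarith) hS
    have hup : Real.log ((n:ℝ)+1) ≤ 2 * Real.log n := by
      rw [show (2:ℝ) * Real.log n = Real.log ((n:ℝ)^(2:ℕ)) by rw [Real.log_pow]; push_cast; ring]
      apply Real.log_le_log (by positivity)
      nlinarith
    rw [div_le_div_iff₀ hSpos (by linarith : (0:ℝ) < (n:ℝ))]
    calc Real.log ((n:ℝ)+1) * n ≤ (2 * Real.log n) * n := by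
          apply mul_le_mul_of_nonneg_right hup (by linarith)
      _ ≤ 4 * Real.log n.factorial := by nlinarith

lemma aux_main_tendsto :
    Tendsto (fun n : ℕ =>
      (2 * Real.log ((n+1).factorial) + Real.log (t (n + 1))) /
        Real.log (∏ k ∈ Finset.Icc 1 n, (t k : ℝ))) atTop (nhds (2 / (α - 1))) := by
  set S : ℕ → ℝ := fun n => Real.log (n.factorial) with hS
  have hα1 : (0:ℝ) < α - 1 := by linarith
  -- lower bound sequence
  have hlow : Tendsto (fun n : ℕ => 2 * S n / ((α - 1) * S n + n * Real.log 2))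
      atTop (nhds (2 / (α - 1))) := by
    have hden : Tendsto (fun n : ℕ => (α - 1) + Real.log 2 * ((n:ℝ) / S n))
        atTop (nhds ((α - 1) + Real.log 2 * 0)) :=
      tendsto_const_nhds.add ((aux_n_div_S_tendsto).const_mul _)
    have h2 : Tendsto (fun n : ℕ => 2 / ((α - 1) + Real.log 2 * ((n:ℝ) / S n)))
        atTop (nhds (2 / (α - 1))) := by
      have := tendsto_const_nhds (x := (2:ℝ)) (f := atTop (α := ℕ)) |>.div hden
        (by simp; linarith)
      simpa only [mul_zero, add_zero, Pi.div_def] using this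
    apply h2.congr'
    filter_upwards [eventually_ge_atTop 2] with n hn
    have hn2 : (2:ℝ) ≤ n := by exact_mod_cast hn
    have hSpos : 0 < S n := by
      have hlogn : 0 < Real.log n := Real.log_pos (by linarith)
      exact lt_of_lt_of_le (by nlinarith) (aux_log_factorial_ge n)
    field_simp
  -- upper bound sequence
  have hhigh : Tendsto (fun n : ℕ =>
      (2 + ((α + 1) * (Real.log (n+1) / S n) + Real.log 2 * (S n)⁻¹)) / (α - 1))
      atTop (nhds (2 / (α - 1))) := by
    have hnum : Tendsto (fun n : ℕ =>
        2 + ((α + 1) * (Real.log (n+1) / S n) + Real.log 2 * (S n)⁻¹))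
        atTop (nhds (2 + ((α + 1) * 0 + Real.log 2 * 0))) :=
      tendsto_const_nhds.add (((aux_lognp1_div_S hα ht).const_mul _).add
        ((aux_S_tendsto.inv_tendsto_atTop).const_mul _))
    have := hnum.div_const (α - 1)
    simpa using this
  -- squeeze
  apply tendsto_of_tendsto_of_tendsto_of_le_of_le' hlow hhigh
  · filter_upwards [eventually_ge_atTop 2] with n hn
    have hn2 : (2:ℝ) ≤ n := by exact_mod_cast hn
    have hlogn : 0 < Real.log n := Real.log_pos (by linarith)
    have hSpos : 0 < S n := lt_of_lt_of_le (by nlinarith) (aux_log_factorial_ge n)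
    have hLlb := aux_L_lb hα ht n
    have hLub := aux_L_ub hα ht n
    have hLpos : 0 < Real.log (∏ k ∈ Finset.Icc 1 n, (t k : ℝ)) :=
      lt_of_lt_of_le (by positivity) hLlb
    have hNlb : 2 * S n ≤ 2 * Real.log ((n+1).factorial) + Real.log (t (n + 1)) := by
      have h1 : S n ≤ Real.log ((n+1).factorial) := by
        apply Real.log_le_log (by positivity)
        exact_mod_cast Nat.factorial_le (Nat.le_succ n)
      have h2 : (0:ℝ) ≤ Real.log (t (n+1)) := Real.log_natCast_nonneg _
      linarith
    apply div_le_div₀ (by linarith) hNlb hLpos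
    calc Real.log (∏ k ∈ Finset.Icc 1 n, (t k : ℝ))
        ≤ n * Real.log 2 + (α - 1) * S n := hLub
      _ = (α - 1) * S n + n * Real.log 2 := by ring
  · filter_upwards [eventually_ge_atTop 2] with n hn
    have hn2 : (2:ℝ) ≤ n := by exact_mod_cast hn
    have hlogn : 0 < Real.log n := Real.log_pos (by linarith)
    have hSpos : 0 < S n := lt_of_lt_of_le (by nlinarith) (aux_log_factorial_ge n)
    have hLlb := aux_L_lb hα ht n
    have hNub : 2 * Real.log ((n+1).factorial) + Real.log (t (n + 1)) ≤
        2 * S n + ((α + 1) * Real.log (n+1) + Real.log 2) := by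
      have h1 : Real.log ((n+1).factorial) = Real.log ((n:ℝ)+1) + S n := by
        rw [hS]
        have : (((n+1).factorial : ℕ) : ℝ) = ((n:ℝ)+1) * (n.factorial : ℝ) := by
          rw [Nat.factorial_succ]; push_cast; ring
        simp only [this]
        rw [Real.log_mul (by positivity) (by positivity)]
      have h2 : Real.log (t (n+1)) ≤ Real.log 2 + (α - 1) * Real.log ((n:ℕ)+1 : ℕ) :=
        aux_log_t_ub hα ht (Nat.le_add_left 1 n)
      push_cast at h2
      rw [h1]; linarith
    have hshape : (2 + ((α + 1) * (Real.log (n+1) / S n) + Real.log 2 * (S n)⁻¹)) / (α - 1)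
        = (2 * S n + ((α + 1) * Real.log (n+1) + Real.log 2)) / ((α - 1) * S n) := by
      have hSne : S n ≠ 0 := ne_of_gt hSpos
      have hαne : α - 1 ≠ 0 := ne_of_gt hα1
      field_simp
    rw [hshape]
    apply div_le_div₀ ?_ hNub (by positivity) hLlb
    have : (0:ℝ) ≤ Real.log ((n:ℝ)+1) := by
      have : ((n:ℝ)+1) = ((n+1 : ℕ) : ℝ) := by push_cast; ring
      rw [this]; exact Real.log_natCast_nonneg _
    have hl2 : (0:ℝ) < Real.log 2 := Real.log_pos (by norm_num)
    nlinarith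

end mainlim

lemma aux_part1_tendsto (α : ℝ) (hα : 1 < α) (t : ℕ → ℕ)
    (t_lb : ∀ k : ℕ, 1 ≤ k → (k : ℝ) ^ (α - 1) ≤ t k)
    (t_ub : ∀ k : ℕ, (t k : ℝ) ≤ 2 * (k : ℝ) ^ (α - 1))
    (x : ℝ)
    (hx : ∀ n : ℕ, 1 ≤ n → n * t n ≤ cfA n x ∧ cfA n x < (n + 1) * t n) :
    Tendsto (fun n : ℕ => Real.log (cfA n x) / (α * Real.log n)) atTop (nhds 1) := by
  have hα0 : (0:ℝ) < α := by linarith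
  have hd : Tendsto (fun n : ℕ => α * Real.log n) atTop atTop :=
    (Real.tendsto_log_atTop.comp tendsto_natCast_atTop_atTop).const_mul_atTop hα0
  have hub : Tendsto (fun n : ℕ => 1 + Real.log 4 * (α * Real.log n)⁻¹) atTop (nhds 1) := by
    have := hd.inv_tendsto_atTop.const_mul (Real.log 4)
    have h2 := (tendsto_const_nhds (x := (1:ℝ)) (f := atTop (α := ℕ))).add this
    simpa using h2
  apply tendsto_of_tendsto_of_tendsto_of_le_of_le' tendsto_const_nhds hub
  · filter_upwards [eventually_ge_atTop 2] with n hn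
    have hn2 : (2:ℝ) ≤ n := by exact_mod_cast hn
    have hnpos : (0:ℝ) < n := by linarith
    have hdpos : 0 < α * Real.log n := by
      have : 0 < Real.log n := Real.log_pos (by linarith)
      positivity
    have hrl : (n:ℝ) ^ α = (n:ℝ) * (n:ℝ) ^ (α - 1) := by
      rw [show α = 1 + (α - 1) by ring, Real.rpow_add hnpos, Real.rpow_one]; norm_num
    have halb : (n:ℝ) ^ α ≤ (cfA n x : ℝ) := by
      have h1 : ((n * t n : ℕ) : ℝ) ≤ (cfA n x : ℝ) := by
        exact_mod_cast (hx n (by omega)).1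
      push_cast at h1
      have h2 := t_lb n (by omega)
      rw [hrl]
      nlinarith [Real.rpow_pos_of_pos hnpos (α - 1)]
    have hlog : α * Real.log n ≤ Real.log (cfA n x) := by
      have := Real.log_le_log (by positivity) halb
      rwa [Real.log_rpow hnpos] at this
    rw [one_le_div hdpos]
    exact hlog
  · filter_upwards [eventually_ge_atTop 2] with n hn
    have hn2 : (2:ℝ) ≤ n := by exact_mod_cast hn
    have hnpos : (0:ℝ) < n := by linarith
    have hdpos : 0 < α * Real.log n := by
      have : 0 < Real.log n := Real.log_pos (by linarith)
      positivity
    have hrl : (n:ℝ) ^ α = (n:ℝ) * (n:ℝ) ^ (α - 1) := by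
      rw [show α = 1 + (α - 1) by ring, Real.rpow_add hnpos, Real.rpow_one]; norm_num
    have hrpos := Real.rpow_pos_of_pos hnpos (α - 1)
    have halb : (n:ℝ) ^ α ≤ (cfA n x : ℝ) := by
      have h1 : ((n * t n : ℕ) : ℝ) ≤ (cfA n x : ℝ) := by
        exact_mod_cast (hx n (by omega)).1
      push_cast at h1
      have h2 := t_lb n (by omega)
      rw [hrl]; nlinarith
    have hapos : (0:ℝ) < (cfA n x : ℝ) := lt_of_lt_of_le (by positivity) halb
    have haub : (cfA n x : ℝ) ≤ 4 * (n:ℝ) ^ α := by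
      have h1 : (cfA n x : ℝ) < (((n + 1) * t n : ℕ) : ℝ) := by
        exact_mod_cast (hx n (by omega)).2
      push_cast at h1
      have h2 := t_ub n
      rw [hrl]; nlinarith
    have hlog : Real.log (cfA n x) ≤ α * Real.log n + Real.log 4 := by
      have := Real.log_le_log hapos haub
      rwa [Real.log_mul (by norm_num) (by positivity), Real.log_rpow hnpos, add_comm] at this
    calc Real.log (cfA n x) / (α * Real.log n)
        ≤ (α * Real.log n + Real.log 4) / (α * Real.log n) := by gcongr
      _ = 1 + Real.log 4 * (α * Real.log n)⁻¹ := by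
          rw [add_div, div_self hdpos.ne', div_eq_mul_inv]

end Aux

/-- For `α > 1` and `tₙ = 2⌊n^{α-1}⌋`, the set `𝔼({tₙ})` is contained in
`{x ∈ Λ : lim (log aₙ(x))/(α log n) = 1}`, and
`ξ = limsup (2 log(n+1)! + log t_{n+1}) / log(t₁ ⋯ tₙ) = 2/(α-1)`. -/
theorem E_seq_subset_and_xi (α : ℝ) (hα : 1 < α)
    (t : ℕ → ℕ) (ht : ∀ n, t n = 2 * ⌊(n : ℝ) ^ (α - 1)⌋₊) :
    {x | x ∈ Set.Ioo (0:ℝ) 1 ∧ ∀ n : ℕ, 1 ≤ n →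
        n * t n ≤ cfA n x ∧ cfA n x < (n + 1) * t n} ⊆
      {x | x ∈ Lam ∧
        Tendsto (fun n : ℕ => Real.log (cfA n x) / (α * Real.log n)) atTop (nhds 1)} ∧
    Filter.limsup
        (fun n : ℕ =>
          (((2 * Real.log (Nat.factorial (n + 1)) + Real.log (t (n + 1))) /
            Real.log (∏ k ∈ Finset.Icc 1 n, (t k : ℝ)) : ℝ) : EReal)) atTop =
      ((2 / (α - 1) : ℝ) : EReal) := by
  constructor
  · intro x hx
    obtain ⟨hxIoo, hxb⟩ := hx
    refine ⟨⟨hxIoo, ?_⟩, ?_⟩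
    · intro n hn
      have h1 := (hxb n hn).2
      have h2 := (hxb (n+1) (by omega)).1
      have h3 : (n+1) * t n ≤ (n+1) * t (n+1) :=
        Nat.mul_le_mul_left _ (aux_t_mono hα ht n)
      omega
    · exact aux_part1_tendsto α hα t (fun k hk => aux_t_lb hα ht hk)
        (fun k => aux_t_ub hα ht k) x hxb
  · have h := aux_main_tendsto hα ht
    have h2 := EReal.tendsto_coe.2 h
    exact h2.limsup_eq
end
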